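/- Let X be a continuum without cut-points and S_1 ⊆ … ⊆ S_k an increasing sequence of closed subsets of X with S_k ≠ ∅, and let E_X denote the set of isolated points of I(X,S⃗). Then for a point z ∈ J(X,S⃗), the following are equivalent: (a) z ∈ E_X × {0}; (b) z satisfies both (α) for every open set U containing z there is a connected open set V with z ∈ V ⊆ U such that V contains a cut-point of J(X,S⃗), and (β) z is a noncut-point of J(X,S⃗). -/

import Mathlib

open Topology

/-- The set of isolated points of the subspace `S` (computed in the ambient space `W`). -/
def isoPts {W : Type*} [TopologicalSpace W] (S : Set W) : Set W :=
  {p | p ∈ S ∧ 𝓝[S \ {p}] p = ⊥}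

/-- The canonical embedding of `X` into the ambient space `X × ℝ^ℕ`. -/
def embW {X : Type*} (x : X) : X × (ℕ → ℝ) := (x, fun _ => 0)

/-- The canonical copy of `X` inside `X × ℝ^ℕ`. -/
def baseW (X : Type*) : Set (X × (ℕ → ℝ)) := {w | w.2 = fun _ => 0}

/-- Place the value `t` in coordinate `j`. -/
def addC {X : Type*} (j : ℕ) (t : ℝ) (w : X × (ℕ → ℝ)) : X × (ℕ → ℝ) :=
  (w.1, Function.update w.2 j t)

/-- `Z'` is a copy of `I(Z, B; D)` for some admissible `D`, realized using coordinate `j`: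
`Z' = Z ∪ D` where `D` is a nonempty set of points `addC j t z` (`z ∈ Z`, `t ∈ (0,1]`),
each of which is isolated in `Z'`, with `cl(D) − D = B`; by convention `D` is a single point
when `B = ∅`. -/
def IsIStep {X : Type*} [TopologicalSpace X] (j : ℕ)
    (Z B Z' : Set (X × (ℕ → ℝ))) : Prop :=
  ∃ D : Set (X × (ℕ → ℝ)),
    Z' = Z ∪ D ∧ D.Nonempty ∧
    (∀ p ∈ D, ∃ z ∈ Z, ∃ t ∈ Set.Ioc (0 : ℝ) 1, p = addC j t z) ∧
    (∀ p ∈ D, 𝓝[Z' \ {p}] p = ⊥) ∧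
    closure D \ D = B ∧
    (B = ∅ → D.Subsingleton)

/-- The iterated construction: `IsITowerFrom j Z As Z'` says that `Z'` is obtained from `Z`
by successively applying the `I(·, D_k ∪ A_{k+1})` construction along the list `As`,
where `D_k` is the current set of isolated points. -/
def IsITowerFrom {X : Type*} [TopologicalSpace X] :
    ℕ → Set (X × (ℕ → ℝ)) → List (Set X) → Set (X × (ℕ → ℝ)) → Prop
  | _, Z, [], Z' => Z' = Z
  | j, Z, A :: rest, Z' =>
      ∃ Zm, IsIStep j Z (isoPts Z ∪ (embW '' A)) Zm ∧ IsITowerFrom (j + 1) Zm rest Z'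

/-- `Z` is a model of `I_n(X, A_1, …, A_n)` where `As = [A_1, …, A_n]`. -/
def IsIModel {X : Type*} [TopologicalSpace X] (As : List (Set X))
    (Z : Set (X × (ℕ → ℝ))) : Prop :=
  IsITowerFrom 0 (baseW X) As Z


/-- The underlying set of `F(Z,B)`: the subspace `Z×{0} ∪ B×[0,1]` of `Z × [0,1]`. -/
abbrev FPts (Z : Type*) (B : Set Z) := {p : Z × unitInterval // p.2 = 0 ∨ p.1 ∈ B}

/-- The relation identifying all points of `B × {1}` to one point. -/
def FRel {Z : Type*} {B : Set Z} (p q : FPts Z B) : Prop :=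
  p = q ∨ (p.val.2 = 1 ∧ q.val.2 = 1)

/-- The space `F(Z,B)`: the quotient of `Z×{0} ∪ B×[0,1]` collapsing `B × {1}` to a point. -/
abbrev FSp (Z : Type*) [TopologicalSpace Z] (B : Set Z) := Quot (@FRel Z B)

/-- The closure of the set `D_X` of added points, viewed inside the subspace `Z`. -/
def JB {X : Type*} [TopologicalSpace X] (Z : Set (X × (ℕ → ℝ))) : Set ↥Z :=
  {z | (z : X × (ℕ → ℝ)) ∈ closure (Z \ baseW X)}

/-- The space `J(X, S⃗) = F(I(X,S⃗), cl(D_X))`, for `Z` a model of `I(X,S⃗)`. -/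
abbrev JSp {X : Type*} [TopologicalSpace X] (Z : Set (X × (ℕ → ℝ))) :=
  FSp (↥Z) (JB Z)

/-- The point of `J(X,S⃗)` determined by a representative. -/
def JPt {X : Type*} [TopologicalSpace X] (Z : Set (X × (ℕ → ℝ)))
    (p : FPts (↥Z) (JB Z)) : JSp Z := Quot.mk FRel p


set_option linter.unusedSectionVars false
set_option linter.unusedVariables false
set_option maxHeartbeats 1000000

section Infra
variable {Y : Type*} [TopologicalSpace Y] {B : Set Y}

theorem frel_equiv : Equivalence (@FRel Y B) := by
  constructor
  · intro a; exact Or.inl rfl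
  · intro a b h; rcases h with h | h
    · exact Or.inl h.symm
    · exact Or.inr ⟨h.2, h.1⟩
  · intro a b c h1 h2; rcases h1 with h1 | h1
    · rwa [h1]
    · rcases h2 with h2 | h2
      · rw [← h2]; exact Or.inr h1
      · exact Or.inr ⟨h1.1, h2.2⟩

theorem fmk_eq_iff (a b : FPts Y B) :
    Quot.mk FRel a = Quot.mk FRel b ↔ (a = b ∨ (a.val.2 = 1 ∧ b.val.2 = 1)) := by
  rw [Quot.eq, Equivalence.eqvGen_iff frel_equiv]; rfl

def Saturated (P : Set (FPts Y B)) : Prop :=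
  ∀ a ∈ P, ∀ b, FRel a b → b ∈ P

theorem preim_mk_image {P : Set (FPts Y B)} (hP : Saturated P) :
    Quot.mk FRel ⁻¹' (Quot.mk FRel '' P) = P := by
  ext a; constructor
  · rintro ⟨b, hb, hba⟩
    rw [fmk_eq_iff] at hba
    rcases hba with rfl | h
    · exact hb
    · exact hP b hb a (Or.inr h)
  · intro h; exact ⟨a, h, rfl⟩

theorem isOpen_mk_image {P : Set (FPts Y B)} (hP : Saturated P) (ho : IsOpen P) :
    IsOpen (Quot.mk FRel '' P : Set (FSp Y B)) := by
  rw [isOpen_coinduced (f := Quot.mk (@FRel Y B)), preim_mk_image hP]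
  exact ho

theorem mem_mk_image {P : Set (FPts Y B)} (hP : Saturated P) (q : FSp Y B) :
    q ∈ Quot.mk FRel '' P ↔ ∃ a ∈ P, Quot.mk FRel a = q := Set.mem_image _ _ _

end Infra

section Tower
variable {X : Type*} [TopologicalSpace X]

theorem addC_not_base {j : ℕ} {t : ℝ} (ht : t ≠ 0) (z : X × (ℕ → ℝ)) :
    addC j t z ∉ baseW X := by
  intro h
  have : (addC j t z).2 j = 0 := by rw [show (addC j t z).2 = fun _ => 0 from h]
  simp [addC, Function.update_self] at this
  exact ht this

theorem step_D_not_base {j : ℕ} {Z D : Set (X × (ℕ → ℝ))}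
    (hform : ∀ p ∈ D, ∃ z ∈ Z, ∃ t ∈ Set.Ioc (0:ℝ) 1, p = addC j t z) :
    ∀ p ∈ D, p ∉ baseW X := by
  intro p hp hb
  obtain ⟨z, _, t, ht, rfl⟩ := hform p hp
  exact addC_not_base (ne_of_gt ht.1) z hb

theorem tower_subset {j : ℕ} {W Z' : Set (X × (ℕ → ℝ))} {As : List (Set X)}
    (h : IsITowerFrom j W As Z') : W ⊆ Z' := by
  induction As generalizing j W with
  | nil => rw [h]
  | cons A rest ih =>
    obtain ⟨Zm, ⟨D, rfl, _⟩, ht⟩ := h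
    exact Set.subset_union_left.trans (ih ht)

/-- every point added in the tower is off the base -/
theorem tower_diff_base {j : ℕ} {W Z' : Set (X × (ℕ → ℝ))} {As : List (Set X)}
    (h : IsITowerFrom j W As Z') : Z' ⊆ W ∪ {p | p ∉ baseW X} := by
  induction As generalizing j W with
  | nil => rw [h]; exact Set.subset_union_left
  | cons A rest ih =>
    obtain ⟨Zm, ⟨D, rfl, _, hform, _⟩, ht⟩ := h
    intro p hp
    rcases ih ht hp with hp | hp
    · rcases hp with hp | hp
      · exact Or.inl hp
      · exact Or.inr (step_D_not_base hform p hp)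
    · exact Or.inr hp

/-- data of the last step of a nonempty tower -/
theorem tower_last {j : ℕ} {W Z' : Set (X × (ℕ → ℝ))} {A : Set X} {As : List (Set X)}
    (h : IsITowerFrom j W (A :: As) Z') :
    ∃ (Wm D : Set (X × (ℕ → ℝ))),
      Z' = Wm ∪ D ∧ D.Nonempty ∧ (∀ p ∈ D, p ∉ baseW X) ∧
      (∀ p ∈ D, 𝓝[Z' \ {p}] p = ⊥) ∧
      closure D \ D = isoPts Wm ∪ embW '' ((A :: As).getLast (by simp)) ∧
      W ⊆ Wm := by
  induction As generalizing j W A with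
  | nil =>
    obtain ⟨Zm, ⟨D, rfl, hne, hform, hiso, hcl, _⟩, ht⟩ := h
    rw [show IsITowerFrom (j+1) (W ∪ D) [] Z' = (Z' = W ∪ D) from rfl] at ht
    subst ht
    exact ⟨W, D, rfl, hne, step_D_not_base hform, hiso, by simpa using hcl, le_refl _⟩
  | cons A2 rest ih =>
    obtain ⟨Zm, ⟨D, rfl, hne, hform, hiso, hcl, _⟩, ht⟩ := h
    obtain ⟨Wm, D2, h1, h2, h3, h4, h5, h6⟩ := ih ht
    exact ⟨Wm, D2, h1, h2, h3, h4, by simpa using h5, Set.subset_union_left.trans h6⟩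

/-- data of the first step -/
theorem tower_first {j : ℕ} {W Z' : Set (X × (ℕ → ℝ))} {A : Set X} {As : List (Set X)}
    (h : IsITowerFrom j W (A :: As) Z') :
    ∃ D : Set (X × (ℕ → ℝ)), D ⊆ Z' ∧ (∀ p ∈ D, p ∉ baseW X) ∧
      closure D \ D = isoPts W ∪ embW '' A := by
  obtain ⟨Zm, ⟨D, rfl, hne, hform, hiso, hcl, _⟩, ht⟩ := h
  exact ⟨D, Set.subset_union_right.trans (tower_subset ht), step_D_not_base hform, hcl⟩

end Tower
section JInfra
variable {X : Type} [MetricSpace X] {Z : Set (X × (ℕ → ℝ))}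

-- singleton of an isolated point is open in the subtype
theorem iso_singleton_open {p : ↥Z} (hp : (p : X × (ℕ → ℝ)) ∈ isoPts Z) :
    IsOpen ({p} : Set ↥Z) := by
  have h1 : (p : X × (ℕ → ℝ)) ∉ closure (Z \ {(p : X × (ℕ → ℝ))}) := by
    rw [mem_closure_iff_nhdsWithin_neBot, hp.2]
    exact fun h => h.ne rfl
  have : Subtype.val ⁻¹' ((closure (Z \ {(p : X × (ℕ → ℝ))}))ᶜ) = ({p} : Set ↥Z) := by
    ext z
    simp only [Set.mem_preimage, Set.mem_compl_iff, Set.mem_singleton_iff]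
    constructor
    · intro hz
      by_contra hne
      exact hz (subset_closure ⟨z.2, fun hs => hne (Subtype.ext hs)⟩)
    · rintro rfl; exact h1
  rw [← this]
  exact (isClosed_closure.isOpen_compl).preimage continuous_subtype_val

theorem isOpen_fst_eq {p : ↥Z} (hp : (p : X × (ℕ → ℝ)) ∈ isoPts Z) :
    IsOpen {w : FPts (↥Z) (JB Z) | w.val.1 = p} := by
  have : {w : FPts (↥Z) (JB Z) | w.val.1 = p}
      = (fun w : FPts (↥Z) (JB Z) => w.val.1) ⁻¹' {p} := rfl
  rw [this]
  exact (iso_singleton_open hp).preimage ((continuous_fst.comp continuous_subtype_val))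

theorem isOpen_ht_lt (c : ℝ) :
    IsOpen {w : FPts (↥Z) (JB Z) | (w.val.2 : ℝ) < c} :=
  isOpen_Iio.preimage (continuous_subtype_val.comp (continuous_snd.comp continuous_subtype_val))

theorem isClosed_fst_eq (p : ↥Z) :
    IsClosed {w : FPts (↥Z) (JB Z) | w.val.1 = p} :=
  isClosed_singleton.preimage (continuous_fst.comp continuous_subtype_val)

theorem isClosed_ht_le (c : ℝ) :
    IsClosed {w : FPts (↥Z) (JB Z) | (w.val.2 : ℝ) ≤ c} :=
  isClosed_Iic.preimage (continuous_subtype_val.comp (continuous_snd.comp continuous_subtype_val))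

theorem ht_ne_one {w : FPts (↥Z) (JB Z)} (h : (w.val.2 : ℝ) < 1) : w.val.2 ≠ 1 := by
  intro he; rw [he] at h; simp at h

theorem saturated_of_no_one {P : Set (FPts (↥Z) (JB Z))}
    (h : ∀ w ∈ P, w.val.2 ≠ 1) : Saturated P := by
  intro a ha b hab
  rcases hab with rfl | hab
  · exact ha
  · exact absurd hab.1 (h a ha)

-- the map t ↦ class of (u, t)
def arcMap (Z : Set (X × (ℕ → ℝ))) (u : ↥Z) (hu : u ∈ JB Z) : unitInterval → JSp Z :=
  fun t => JPt Z ⟨(u, t), Or.inr hu⟩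

theorem arcMap_continuous {u : ↥Z} (hu : u ∈ JB Z) : Continuous (arcMap Z u hu) := by
  apply Continuous.comp (continuous_quot_mk)
  exact Continuous.subtype_mk (continuous_const.prodMk continuous_id) _

-- the base map
def baseMap (Z : Set (X × (ℕ → ℝ))) (hbZ : baseW X ⊆ Z) : X → JSp Z :=
  fun x => JPt Z ⟨(⟨embW x, hbZ (by exact rfl)⟩, 0), Or.inl rfl⟩

theorem baseMap_continuous (hbZ : baseW X ⊆ Z) : Continuous (baseMap Z hbZ) := by
  apply Continuous.comp (continuous_quot_mk)
  apply Continuous.subtype_mk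
  apply Continuous.prodMk _ continuous_const
  apply Continuous.subtype_mk
  exact continuous_id.prodMk continuous_const

def phiMap (Z : Set (X × (ℕ → ℝ))) : ↥Z → JSp Z :=
  fun z => JPt Z ⟨(z, 0), Or.inl rfl⟩

theorem phiMap_continuous : Continuous (phiMap Z) := by
  apply Continuous.comp (continuous_quot_mk)
  exact Continuous.subtype_mk (continuous_id.prodMk continuous_const) _

end JInfra
section Pieces
variable {X : Type} [MetricSpace X] {Z : Set (X × (ℕ → ℝ))}

open Set

theorem preconn_lt {c : ℝ} (hc0 : 0 < c) (hc1 : c ≤ 1) :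
    IsPreconnected {t : unitInterval | (t : ℝ) < c} := by
  have : {t : unitInterval | (t : ℝ) < c} = Set.projIcc (0:ℝ) 1 zero_le_one '' Set.Iio c := by
    ext t; constructor
    · intro ht
      exact ⟨(t : ℝ), ht, Set.projIcc_val zero_le_one t⟩
    · rintro ⟨x, hx, rfl⟩
      simp only [Set.mem_setOf_eq]
      rcases le_or_gt x 0 with h | h
      · rw [Set.projIcc_of_le_left _ h]; exact hc0
      · rw [Set.projIcc_of_mem _ ⟨le_of_lt h, le_trans (le_of_lt hx) hc1⟩]
        exact hx
  rw [this]
  exact (isPreconnected_Iio).image _ (continuous_projIcc).continuousOn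

theorem preconn_gt {s : unitInterval} (hs : (s : ℝ) < 1) :
    IsPreconnected {t : unitInterval | (s : ℝ) < (t : ℝ)} := by
  have : {t : unitInterval | (s:ℝ) < (t:ℝ)} = Set.projIcc (0:ℝ) 1 zero_le_one '' Set.Ioi (s:ℝ) := by
    ext t; constructor
    · intro ht
      exact ⟨(t : ℝ), ht, Set.projIcc_val zero_le_one t⟩
    · rintro ⟨x, hx, rfl⟩
      simp only [Set.mem_setOf_eq]
      rcases le_or_gt x 1 with h | h
      · rw [Set.projIcc_of_mem _ ⟨le_trans s.2.1 (le_of_lt hx), h⟩]; exact hx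
      · rw [Set.projIcc_of_right_le _ (le_of_lt h)]; exact hs
  rw [this]
  exact (isPreconnected_Ioi).image _ (continuous_projIcc).continuousOn

-- arc pieces as images
theorem arc_image_eq (u : ↥Z) (hu : u ∈ JB Z) (T : Set unitInterval) :
    JPt Z '' {w : FPts (↥Z) (JB Z) | w.val.1 = u ∧ w.val.2 ∈ T}
      = arcMap Z u hu '' T := by
  ext q; constructor
  · rintro ⟨w, ⟨h1, h2⟩, rfl⟩
    refine ⟨w.val.2, h2, ?_⟩
    unfold arcMap JPt
    congr 1
    apply Subtype.ext
    show ((u, w.val.2) : ↥Z × unitInterval) = w.val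
    rw [← h1]
  · rintro ⟨t, ht, rfl⟩
    exact ⟨⟨(u, t), Or.inr hu⟩, ⟨rfl, ht⟩, rfl⟩

theorem arc_piece_preconn (u : ↥Z) (hu : u ∈ JB Z) {T : Set unitInterval}
    (hT : IsPreconnected T) :
    IsPreconnected (JPt Z '' {w : FPts (↥Z) (JB Z) | w.val.1 = u ∧ w.val.2 ∈ T}) := by
  rw [arc_image_eq u hu T]
  exact hT.image _ (arcMap_continuous hu).continuousOn

-- gluing by touching closures
theorem preconn_union_closure {α : Type*} [TopologicalSpace α] {A B : Set α}
    (hA : IsPreconnected A) (hB : IsPreconnected B)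
    (h : (B ∩ closure A).Nonempty) : IsPreconnected (A ∪ B) := by
  obtain ⟨x, hxB, hxA⟩ := h
  have hA' : IsPreconnected (insert x A) := by
    apply hA.subset_closure (Set.subset_insert _ _)
    intro y hy
    rcases hy with rfl | hy
    · exact hxA
    · exact subset_closure hy
  have : A ∪ B = insert x A ∪ B := by
    ext y; simp only [Set.mem_union, Set.mem_insert_iff]
    constructor
    · rintro (h | h)
      · exact Or.inl (Or.inr h)
      · exact Or.inr h
    · rintro ((rfl | h) | h)
      · exact Or.inr hxB
      · exact Or.inl h
      · exact Or.inr h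
  rw [this]
  exact IsPreconnected.union x (Set.mem_insert _ _) hxB hA' hB

-- X perfect if nondegenerate connected T1
theorem conn_perfect {x y : X} [ConnectedSpace X] (hxy : y ≠ x) :
    x ∈ closure ({x}ᶜ : Set X) := by
  by_contra h
  have hop : IsOpen ({x} : Set X) := by
    have : ({x} : Set X) = (closure ({x}ᶜ))ᶜ := by
      apply Set.eq_of_subset_of_subset
      · intro z hz
        rw [Set.mem_singleton_iff] at hz; subst hz; exact h
      · intro z hz
        by_contra hne
        exact hz (subset_closure hne)
    rw [this]; exact isClosed_closure.isOpen_compl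
  have := (isClopen_iff.mp ⟨isClosed_singleton, hop⟩)
  rcases this with h1 | h1
  · exact (Set.singleton_nonempty x).ne_empty h1
  · exact hxy (h1 ▸ Set.mem_univ y : y ∈ ({x} : Set X))
end Pieces
section Master
open Set
variable {X : Type} [MetricSpace X]

theorem jpt_eq_iff {Z : Set (X × (ℕ → ℝ))} (a b : FPts (↥Z) (JB Z)) :
    JPt Z a = JPt Z b ↔ (a = b ∨ (a.val.2 = 1 ∧ b.val.2 = 1)) := fmk_eq_iff a b

theorem baseW_closed : IsClosed (baseW X) := by
  have : baseW X = Prod.snd ⁻¹' {fun _ => (0:ℝ)} := rfl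
  rw [this]; exact isClosed_singleton.preimage continuous_snd

theorem master_noncut [ConnectedSpace X]
    (hXnc : ∀ x : X, IsPreconnected ({x}ᶜ : Set X))
    {Z : Set (X × (ℕ → ℝ))} (hbZ : baseW X ⊆ Z)
    {Q : Set X} (hQne : Q.Nonempty)
    (hQZ : ∀ x ∈ Q, embW x ∈ closure (Z \ baseW X))
    (r : ↥Z) (s : unitInterval) (hs : (s : ℝ) < 1)
    (hw : s = 0 ∨ r ∈ JB Z)
    (H1 : s ≠ 0 → (r : X × (ℕ → ℝ)) ∉ baseW X →
       (r : X × (ℕ → ℝ)) ∈ closure (Z \ {(r : X × (ℕ → ℝ))}))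
    (H2 : (r : X × (ℕ → ℝ)) ∈ baseW X → (∀ x ∈ Q, embW x = (r : X × (ℕ → ℝ))) →
       (s ≠ 0 ∨ baseW X ⊆ {(r : X × (ℕ → ℝ))})) :
    IsPreconnected ({JPt Z ⟨(r, s), hw⟩}ᶜ : Set (JSp Z)) := by
  classical
  obtain ⟨x0, hx0⟩ := hQne
  have hu0Z : embW x0 ∈ Z := hbZ rfl
  set u0 : ↥Z := ⟨embW x0, hu0Z⟩ with hu0def
  have hu0B : u0 ∈ JB Z := hQZ x0 hx0
  set w : FPts (↥Z) (JB Z) := ⟨(r, s), hw⟩ with hwdef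
  set apexPt : JSp Z := JPt Z ⟨(u0, 1), Or.inr hu0B⟩ with hapexdef
  set Pfull : ↥Z → Set (JSp Z) :=
    fun u => JPt Z '' {w' : FPts (↥Z) (JB Z) | w'.val.1 = u} with hPfulldef
  set Pup : Set (JSp Z) :=
    JPt Z '' {w' : FPts (↥Z) (JB Z) | w'.val.1 = r ∧ (s:ℝ) < (w'.val.2 : ℝ)} with hPupdef
  set Plow : Set (JSp Z) :=
    JPt Z '' {w' : FPts (↥Z) (JB Z) | w'.val.1 = r ∧ (w'.val.2 : ℝ) < (s:ℝ)} with hPlowdef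
  set Low : Set (JSp Z) :=
    JPt Z '' {w' : FPts (↥Z) (JB Z) |
      (w'.val.1 : X × (ℕ → ℝ)) ∈ baseW X ∧ w'.val.1 ≠ r ∧ w'.val.2 = 0} with hLowdef
  set C1 : Set (Set (JSp Z)) :=
    insert {apexPt} (Pfull '' {u : ↥Z | u ∈ JB Z ∧ u ≠ r}) with hC1def
  set Q1 : Set (JSp Z) := ⋃₀ C1 with hQ1def
  -- apex is in every full arc
  have apex_mem_Pfull : ∀ u : ↥Z, u ∈ JB Z → apexPt ∈ Pfull u := by
    intro u hu
    refine ⟨⟨(u, 1), Or.inr hu⟩, rfl, ?_⟩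
    rw [jpt_eq_iff]; exact Or.inr ⟨rfl, rfl⟩
  have hfull_eq : ∀ u : ↥Z,
      {w' : FPts (↥Z) (JB Z) | w'.val.1 = u}
        = {w' : FPts (↥Z) (JB Z) | w'.val.1 = u ∧ w'.val.2 ∈ Set.univ} := by
    intro u; ext w'; simp
  have hQ1 : IsPreconnected Q1 := by
    apply isPreconnected_sUnion apexPt C1
    · intro A hA
      rcases hA with rfl | ⟨u, hu, rfl⟩
      · exact rfl
      · exact apex_mem_Pfull u hu.1
    · intro A hA
      rcases hA with rfl | ⟨u, hu, rfl⟩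
      · exact isPreconnected_singleton
      · rw [hPfulldef]
        simp only
        rw [hfull_eq u]
        exact arc_piece_preconn u hu.1 isPreconnected_univ
  have hQ1apex : apexPt ∈ Q1 := ⟨{apexPt}, Set.mem_insert _ _, rfl⟩
  -- Q2
  have hQ2 : IsPreconnected (Q1 ∪ Pup) := by
    rcases Set.eq_empty_or_nonempty Pup with he | hne
    · rw [he, Set.union_empty]; exact hQ1
    · obtain ⟨q, w', ⟨h1, h2⟩, rfl⟩ := hne
      have hw2 : w'.val.2 ≠ 0 := by
        intro h
        rw [h] at h2
        exact absurd (lt_of_le_of_lt s.2.1 h2) (by norm_num)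
      have hrB : r ∈ JB Z := h1 ▸ w'.2.resolve_left hw2
      have hPup : IsPreconnected Pup := by
        rw [hPupdef]
        have : {w' : FPts (↥Z) (JB Z) | w'.val.1 = r ∧ (s:ℝ) < (w'.val.2 : ℝ)}
            = {w' : FPts (↥Z) (JB Z) | w'.val.1 = r ∧ w'.val.2 ∈ {t : unitInterval | (s:ℝ) < (t:ℝ)}} := rfl
        rw [this]
        exact arc_piece_preconn r hrB (preconn_gt hs)
      have hapexPup : apexPt ∈ Pup := by
        refine ⟨⟨(r, 1), Or.inr hrB⟩, ⟨rfl, by exact_mod_cast hs⟩, ?_⟩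
        rw [jpt_eq_iff]; exact Or.inr ⟨rfl, rfl⟩
      exact IsPreconnected.union apexPt hQ1apex hapexPup hQ1 hPup
  -- Q3
  have hQ3 : IsPreconnected (Q1 ∪ Pup ∪ Plow) := by
    rcases Set.eq_empty_or_nonempty Plow with he | hne
    · rw [he, Set.union_empty]; exact hQ2
    · obtain ⟨q, w', ⟨h1, h2⟩, rfl⟩ := hne
      have hspos : (0:ℝ) < (s:ℝ) := lt_of_le_of_lt w'.val.2.2.1 h2
      have hs0 : s ≠ 0 := by
        intro h; rw [h] at hspos; norm_num at hspos
      have hrB : r ∈ JB Z := hw.resolve_left hs0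
      have hPlow : IsPreconnected Plow := by
        rw [hPlowdef]
        have : {w' : FPts (↥Z) (JB Z) | w'.val.1 = r ∧ (w'.val.2:ℝ) < (s : ℝ)}
            = {w' : FPts (↥Z) (JB Z) | w'.val.1 = r ∧ w'.val.2 ∈ {t : unitInterval | (t:ℝ) < (s:ℝ)}} := rfl
        rw [this]
        exact arc_piece_preconn r hrB (preconn_lt hspos s.2.2)
      -- the point (r,0) lies in Plow and in the closure of Q1
      have hx1Plow : phiMap Z r ∈ Plow := ⟨⟨(r,0), Or.inl rfl⟩, ⟨rfl, hspos⟩, rfl⟩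
      have hrcl : (r : X × (ℕ → ℝ)) ∈ closure ((Z \ baseW X) \ {(r : X × (ℕ → ℝ))}) := by
        by_cases hrb : (r : X × (ℕ → ℝ)) ∈ baseW X
        · have heq : (Z \ baseW X) \ {(r : X × (ℕ → ℝ))} = Z \ baseW X := by
            ext z; constructor
            · exact fun hz => hz.1
            · intro hz
              refine ⟨hz, fun hc => ?_⟩
              rw [Set.mem_singleton_iff] at hc
              rw [hc] at hz
              exact hz.2 hrb
          rw [heq]; exact hrB
        · have h' := H1 hs0 hrb
          have hsplit : Z \ {(r : X × (ℕ → ℝ))} ⊆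
              baseW X ∪ ((Z \ baseW X) \ {(r : X × (ℕ → ℝ))}) := by
            intro z hz
            by_cases hzb : z ∈ baseW X
            · exact Or.inl hzb
            · exact Or.inr ⟨⟨hz.1, hzb⟩, hz.2⟩
          have := closure_mono hsplit h'
          rw [closure_union] at this
          rcases this with h'' | h''
          · exact absurd ((baseW_closed (X := X)).closure_eq ▸ h'') hrb
          · exact h''
      have hx1cl : phiMap Z r ∈ closure (Q1 ∪ Pup) := by
        have hsub : (r : ↥Z) ∈ closure {z : ↥Z | (z : X × (ℕ → ℝ)) ∈ Z \ baseW X ∧ z ≠ r} := by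
          rw [closure_subtype]
          have himg : Subtype.val '' {z : ↥Z | (z : X × (ℕ → ℝ)) ∈ Z \ baseW X ∧ z ≠ r}
              = (Z \ baseW X) \ {(r : X × (ℕ → ℝ))} := by
            ext z; constructor
            · rintro ⟨z', ⟨hz1, hz2⟩, rfl⟩
              exact ⟨hz1, fun hh => hz2 (Subtype.ext hh)⟩
            · rintro ⟨hz1, hz2⟩
              exact ⟨⟨z, hz1.1⟩, ⟨hz1, fun hh => hz2 (congrArg Subtype.val hh)⟩, rfl⟩
          rw [himg]; exact hrcl
        apply map_mem_closure (phiMap_continuous) hsub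
        intro z hz
        apply Set.mem_union_left
        refine ⟨Pfull z, Set.mem_insert_iff.mpr (Or.inr ⟨z, ⟨subset_closure hz.1, hz.2⟩, rfl⟩), ?_⟩
        exact ⟨⟨(z, 0), Or.inl rfl⟩, rfl, rfl⟩
      exact preconn_union_closure hQ2 hPlow ⟨phiMap Z r, hx1Plow, hx1cl⟩
  -- description of Low as image of base map
  have hLow_eq : Low = baseMap Z hbZ '' {x : X | embW x ≠ (r : X × (ℕ → ℝ))} := by
    ext q; constructor
    · rintro ⟨w', ⟨hb, hner, h0⟩, rfl⟩
      have hfst : embW (w'.val.1 : X × (ℕ → ℝ)).1 = (w'.val.1 : X × (ℕ → ℝ)) :=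
        Prod.ext_iff.mpr ⟨rfl, hb.symm⟩
      refine ⟨(w'.val.1 : X × (ℕ → ℝ)).1, ?_, ?_⟩
      · intro hcon
        apply hner
        apply Subtype.ext
        rw [← hfst]; exact hcon
      · unfold baseMap
        rw [jpt_eq_iff]
        left
        apply Subtype.ext
        apply Prod.ext
        · exact Subtype.ext hfst
        · exact h0.symm
    · rintro ⟨x, hx, rfl⟩
      refine ⟨⟨(⟨embW x, hbZ rfl⟩, 0), Or.inl rfl⟩, ⟨rfl, ?_, rfl⟩, rfl⟩
      intro hcon
      exact hx (congrArg Subtype.val hcon)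
  have hLowpre : IsPreconnected Low := by
    rw [hLow_eq]
    apply IsPreconnected.image _ _ (baseMap_continuous hbZ).continuousOn
    by_cases hrb : (r : X × (ℕ → ℝ)) ∈ baseW X
    · have hset : {x : X | embW x ≠ (r : X × (ℕ → ℝ))} = ({(r : X × (ℕ → ℝ)).1}ᶜ : Set X) := by
        ext x
        simp only [Set.mem_setOf_eq, Set.mem_compl_iff, Set.mem_singleton_iff]
        constructor
        · intro h hc
          apply h
          rw [hc]
          exact Prod.ext_iff.mpr ⟨rfl, hrb.symm⟩
        · intro h hc
          exact h (congrArg Prod.fst hc)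
      rw [hset]; exact hXnc _
    · have hset : {x : X | embW x ≠ (r : X × (ℕ → ℝ))} = Set.univ := by
        ext x
        simp only [Set.mem_setOf_eq, Set.mem_univ, iff_true]
        intro hc
        exact hrb (hc ▸ rfl)
      rw [hset]; exact isPreconnected_univ
  -- Q4
  have hQ4 : IsPreconnected (Q1 ∪ Pup ∪ Plow ∪ Low) := by
    rcases Set.eq_empty_or_nonempty Low with he | hne
    · rw [he, Set.union_empty]; exact hQ3
    · by_cases hex : ∃ x ∈ Q, embW x ≠ (r : X × (ℕ → ℝ))
      · obtain ⟨x1, hx1Q, hx1ne⟩ := hex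
        set u1 : ↥Z := ⟨embW x1, hbZ rfl⟩ with hu1def
        have hu1B : u1 ∈ JB Z := hQZ x1 hx1Q
        have hu1ne : u1 ≠ r := fun h => hx1ne (congrArg Subtype.val h)
        have hpt1 : phiMap Z u1 ∈ Low :=
          ⟨⟨(u1, 0), Or.inl rfl⟩, ⟨rfl, hu1ne, rfl⟩, rfl⟩
        have hpt2 : phiMap Z u1 ∈ Q1 ∪ Pup ∪ Plow := by
          apply Set.mem_union_left; apply Set.mem_union_left
          exact ⟨Pfull u1, Set.mem_insert_iff.mpr (Or.inr ⟨u1, ⟨hu1B, hu1ne⟩, rfl⟩),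
            ⟨⟨(u1, 0), Or.inl rfl⟩, rfl, rfl⟩⟩
        exact preconn_union_closure hQ3 hLowpre ⟨phiMap Z u1, hpt1, subset_closure hpt2⟩
      · push_neg at hex
        have hrb : (r : X × (ℕ → ℝ)) ∈ baseW X := by
          rw [← hex x0 hx0]; exact rfl
        rcases H2 hrb hex with hs0 | hbsub
        · -- s ≠ 0 : glue through (r,0) ∈ Plow and closure of Low
          have hspos : (0:ℝ) < (s:ℝ) := by
            rcases lt_or_eq_of_le s.2.1 with h | h
            · exact h
            · exact absurd (Subtype.ext h.symm) hs0
          have hrB : r ∈ JB Z := hw.resolve_left hs0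
          have hx1Plow : phiMap Z r ∈ Q1 ∪ Pup ∪ Plow := by
            apply Set.mem_union_right
            exact ⟨⟨(r,0), Or.inl rfl⟩, ⟨rfl, hspos⟩, rfl⟩
          -- (r,0) is in the closure of Low
          obtain ⟨q, w', ⟨hb', hner', h0'⟩, rfl⟩ := hne
          have hyne : (w'.val.1 : X × (ℕ → ℝ)).1 ≠ x0 := by
            intro hcon
            apply hner'
            apply Subtype.ext
            have hfst : embW (w'.val.1 : X × (ℕ → ℝ)).1 = (w'.val.1 : X × (ℕ → ℝ)) :=
              Prod.ext_iff.mpr ⟨rfl, hb'.symm⟩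
            rw [← hfst, hcon, hex x0 hx0]
          have hclX : x0 ∈ closure ({x0}ᶜ : Set X) := conn_perfect hyne
          have hsetc : ({x0}ᶜ : Set X) = {x : X | embW x ≠ (r : X × (ℕ → ℝ))} := by
            ext x
            simp only [Set.mem_compl_iff, Set.mem_singleton_iff, Set.mem_setOf_eq]
            constructor
            · intro h hc
              apply h
              have := hex x0 hx0
              have h2 : embW x = embW x0 := by rw [hc, this]
              exact congrArg Prod.fst h2
            · intro h hc
              apply h
              rw [hc]
              exact hex x0 hx0
          have : baseMap Z hbZ x0 ∈ closure Low := by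
            rw [hLow_eq, ← hsetc]
            apply map_mem_closure (baseMap_continuous hbZ) hclX
            intro y hy
            exact ⟨y, hsetc ▸ hy, rfl⟩
          have hbeq : baseMap Z hbZ x0 = phiMap Z r := by
            unfold baseMap phiMap
            apply congrArg (JPt Z)
            apply Subtype.ext
            exact Prod.ext_iff.mpr ⟨Subtype.ext (hex x0 hx0), rfl⟩
          rw [hbeq] at this
          have := preconn_union_closure hLowpre hQ3 ⟨phiMap Z r, hx1Plow, this⟩
          rwa [Set.union_comm] at this
        · -- base ⊆ {r} : Low is empty, contradiction
          exfalso
          obtain ⟨q, w', ⟨hb', hner', h0'⟩, rfl⟩ := hne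
          exact hner' (Subtype.ext (hbsub hb'))
  -- final set equality
  have hset : ({JPt Z w}ᶜ : Set (JSp Z)) = Q1 ∪ Pup ∪ Plow ∪ Low := by
    ext q; constructor
    · intro hq
      obtain ⟨a, rfl⟩ := Quot.exists_rep q
      have hne : (Quot.mk FRel a : JSp Z) ≠ JPt Z w := hq
      by_cases ht1 : a.val.2 = 1
      · apply Set.mem_union_left; apply Set.mem_union_left; apply Set.mem_union_left
        refine ⟨{apexPt}, Set.mem_insert _ _, ?_⟩
        show (Quot.mk FRel a : JSp Z) = apexPt
        rw [show (Quot.mk FRel a : JSp Z) = JPt Z a from rfl, hapexdef, jpt_eq_iff]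
        exact Or.inr ⟨ht1, rfl⟩
      · by_cases hzr : a.val.1 = r
        · rcases lt_trichotomy ((a.val.2 : ℝ)) ((s:ℝ)) with h | h | h
          · apply Set.mem_union_left; apply Set.mem_union_right
            exact ⟨a, ⟨hzr, h⟩, rfl⟩
          · exfalso
            apply hne
            show JPt Z a = JPt Z w
            rw [jpt_eq_iff]
            left
            apply Subtype.ext
            apply Prod.ext hzr (Subtype.ext h)
          · apply Set.mem_union_left; apply Set.mem_union_left; apply Set.mem_union_right
            exact ⟨a, ⟨hzr, h⟩, rfl⟩
        · by_cases ht0 : a.val.2 = 0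
          · by_cases hzb : (a.val.1 : X × (ℕ → ℝ)) ∈ baseW X
            · apply Set.mem_union_right
              exact ⟨a, ⟨hzb, hzr, ht0⟩, rfl⟩
            · apply Set.mem_union_left; apply Set.mem_union_left; apply Set.mem_union_left
              have hzB : a.val.1 ∈ JB Z := subset_closure ⟨a.val.1.2, hzb⟩
              exact ⟨Pfull a.val.1,
                Set.mem_insert_iff.mpr (Or.inr ⟨a.val.1, ⟨hzB, hzr⟩, rfl⟩),
                ⟨a, rfl, rfl⟩⟩
          · have hzB : a.val.1 ∈ JB Z := a.2.resolve_left ht0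
            apply Set.mem_union_left; apply Set.mem_union_left; apply Set.mem_union_left
            exact ⟨Pfull a.val.1,
              Set.mem_insert_iff.mpr (Or.inr ⟨a.val.1, ⟨hzB, hzr⟩, rfl⟩),
              ⟨a, rfl, rfl⟩⟩
    · intro hq
      simp only [Set.mem_compl_iff, Set.mem_singleton_iff]
      intro hcon
      have hsne1 : (w.val.2 : unitInterval) ≠ 1 := by
        intro h
        rw [show w.val.2 = s from rfl] at h
        rw [h] at hs; norm_num at hs
      rcases hq with ((hq | hq) | hq) | hq
      · obtain ⟨A, hA, hqA⟩ := hq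
        rcases hA with rfl | ⟨u, hu, rfl⟩
        · rw [Set.mem_singleton_iff] at hqA
          rw [hqA, hapexdef] at hcon
          rw [jpt_eq_iff] at hcon
          rcases hcon with h | h
          · exact hsne1 (by rw [← h])
          · exact hsne1 h.2
        · obtain ⟨w', hw', rfl⟩ := hqA
          rw [jpt_eq_iff] at hcon
          rcases hcon with h | h
          · apply hu.2
            rw [← hw']
            rw [h]
          · exact hsne1 h.2
      · obtain ⟨w', ⟨h1, h2⟩, rfl⟩ := hq
        rw [jpt_eq_iff] at hcon
        rcases hcon with h | h
        · have : (w'.val.2 : ℝ) = (s : ℝ) := by rw [h]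
          rw [this] at h2; exact lt_irrefl _ h2
        · exact hsne1 h.2
      · obtain ⟨w', ⟨h1, h2⟩, rfl⟩ := hq
        rw [jpt_eq_iff] at hcon
        rcases hcon with h | h
        · have : (w'.val.2 : ℝ) = (s : ℝ) := by rw [h]
          rw [this] at h2; exact lt_irrefl _ h2
        · exact hsne1 h.2
      · obtain ⟨w', ⟨h1, h2, h3⟩, rfl⟩ := hq
        rw [jpt_eq_iff] at hcon
        rcases hcon with h | h
        · exact h2 (congrArg (fun v : FPts (↥Z) (JB Z) => v.val.1) h)
        · exact hsne1 h.2
  rw [hset]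
  exact hQ4
end Master
section Cut
open Set
variable {X : Type} [MetricSpace X] {Z : Set (X × (ℕ → ℝ))}

theorem ui_coe_zero : ((0 : unitInterval) : ℝ) = 0 := rfl
theorem ui_coe_one : ((1 : unitInterval) : ℝ) = 1 := rfl

theorem fpt_height_coe {a b : FPts (↥Z) (JB Z)} (h : a = b) :
    (a.val.2 : ℝ) = (b.val.2 : ℝ) := by rw [h]

theorem fpt_fst {a b : FPts (↥Z) (JB Z)} (h : a = b) : a.val.1 = b.val.1 := by rw [h]

theorem jpt_ne {a b : FPts (↥Z) (JB Z)} (h1 : a ≠ b)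
    (h2 : ¬(a.val.2 = 1 ∧ b.val.2 = 1)) : JPt Z a ≠ JPt Z b := by
  intro h; rw [jpt_eq_iff] at h; tauto

theorem ui_one_of_eq {t : unitInterval} (h : t = 1) : (t : ℝ) = 1 := by rw [h]; rfl

theorem not_preconn_of_sep {C u v : Set (JSp Z)} (hu : IsOpen u) (hv : IsOpen v)
    (hC : C ⊆ u ∪ v) (h1 : (C ∩ u).Nonempty) (h2 : (C ∩ v).Nonempty)
    (hdisj : C ∩ (u ∩ v) = ∅) : ¬ IsPreconnected C := by
  intro hpre
  obtain ⟨x, hx⟩ := hpre u v hu hv hC h1 h2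
  rw [hdisj] at hx
  exact hx

theorem cut_iso_arc {p : ↥Z} (hp : (p : X × (ℕ → ℝ)) ∈ isoPts Z) (hpB : p ∈ JB Z)
    {s : unitInterval} (h0 : (0:ℝ) < (s:ℝ)) (h1 : (s:ℝ) < 1) :
    ¬ IsPreconnected ({JPt Z ⟨(p, s), Or.inr hpB⟩}ᶜ : Set (JSp Z)) := by
  set w0 : FPts (↥Z) (JB Z) := ⟨(p, s), Or.inr hpB⟩ with hw0
  set Pu : Set (FPts (↥Z) (JB Z)) := {w | w.val.1 = p ∧ (w.val.2 : ℝ) < (s:ℝ)} with hPu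
  set Pv : Set (FPts (↥Z) (JB Z)) := {w | ¬(w.val.1 = p ∧ (w.val.2 : ℝ) ≤ (s:ℝ))} with hPv
  have huo : IsOpen (JPt Z '' Pu) := by
    apply isOpen_mk_image
    · exact saturated_of_no_one (fun w hw => ht_ne_one (lt_trans hw.2 h1))
    · exact (isOpen_fst_eq hp).inter (isOpen_ht_lt _)
  have hvo : IsOpen (JPt Z '' Pv) := by
    apply isOpen_mk_image
    · intro a ha b hab
      rcases hab with rfl | hab
      · exact ha
      · intro hb
        have : (b.val.2 : ℝ) = 1 := ui_one_of_eq hab.2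
        rw [this] at hb
        exact absurd (lt_of_le_of_lt hb.2 h1) (by norm_num)
    · exact ((isClosed_fst_eq p).inter (isClosed_ht_le _)).isOpen_compl
  apply not_preconn_of_sep huo hvo
  · intro q hq
    obtain ⟨a, rfl⟩ := Quot.exists_rep q
    have hne : JPt Z a ≠ JPt Z w0 := hq
    by_cases hfst : a.val.1 = p
    · rcases lt_trichotomy ((a.val.2 : ℝ)) ((s:ℝ)) with h | h | h
      · exact Or.inl ⟨a, ⟨hfst, h⟩, rfl⟩
      · exfalso
        apply hne
        rw [jpt_eq_iff]
        exact Or.inl (Subtype.ext (Prod.ext_iff.mpr ⟨hfst, Subtype.ext h⟩))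
      · exact Or.inr ⟨a, fun hc => absurd h (not_lt.mpr hc.2), rfl⟩
    · exact Or.inr ⟨a, fun hc => hfst hc.1, rfl⟩
  · refine ⟨JPt Z ⟨(p, 0), Or.inl rfl⟩, ?_, ⟨(p,0), Or.inl rfl⟩, ⟨rfl, h0⟩, rfl⟩
    apply jpt_ne
    · intro h
      have := fpt_height_coe h
      rw [ui_coe_zero] at this
      rw [← this] at h0; norm_num at h0
    · rintro ⟨h, -⟩
      have := ui_one_of_eq h
      rw [ui_coe_zero] at this; norm_num at this
  · refine ⟨JPt Z ⟨(p, 1), Or.inr hpB⟩, ?_, ⟨(p,1), Or.inr hpB⟩, ?_, rfl⟩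
    · apply jpt_ne
      · intro h
        have := fpt_height_coe h
        rw [ui_coe_one] at this
        rw [← this] at h1; norm_num at h1
      · rintro ⟨-, h⟩
        have := ui_one_of_eq h
        rw [← this] at h1; norm_num at h1
        exact lt_irrefl _ h1
    · intro hc
      have : ((1:unitInterval):ℝ) ≤ (s:ℝ) := hc.2
      rw [ui_coe_one] at this
      exact absurd this (not_le.mpr h1)
  · apply Set.eq_empty_iff_forall_notMem.mpr
    rintro x ⟨-, ⟨a, ha, rfl⟩, ⟨b, hb, hba⟩⟩
    have : b = a := by
      rw [jpt_eq_iff] at hba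
      rcases hba with h | h
      · exact h
      · exfalso
        have h4 := ui_one_of_eq h.2
        have h3 : ((a.val.2 : ℝ)) < (s:ℝ) := ha.2
        rw [h4] at h3
        exact absurd (lt_trans h3 h1) (by norm_num)
    rw [this] at hb
    exact hb ⟨ha.1, le_of_lt ha.2⟩

theorem cut_apex {p0 : ↥Z} (hp0 : (p0 : X × (ℕ → ℝ)) ∈ isoPts Z) (hp0B : p0 ∈ JB Z)
    {z1 : ↥Z} (hz1 : z1 ≠ p0) :
    ¬ IsPreconnected ({JPt Z ⟨(p0, 1), Or.inr hp0B⟩}ᶜ : Set (JSp Z)) := by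
  set Pu : Set (FPts (↥Z) (JB Z)) := {w | w.val.1 = p0 ∧ (w.val.2 : ℝ) < 1} with hPu
  set Pv : Set (FPts (↥Z) (JB Z)) := {w | w.val.1 ≠ p0 ∧ (w.val.2 : ℝ) < 1} with hPv
  have hsatu : Saturated Pu := saturated_of_no_one (fun w hw => ht_ne_one hw.2)
  have hsatv : Saturated Pv := saturated_of_no_one (fun w hw => ht_ne_one hw.2)
  have huo : IsOpen (JPt Z '' Pu) :=
    isOpen_mk_image hsatu ((isOpen_fst_eq hp0).inter (isOpen_ht_lt _))
  have hvo : IsOpen (JPt Z '' Pv) :=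
    isOpen_mk_image hsatv (((isClosed_fst_eq p0).isOpen_compl).inter (isOpen_ht_lt _))
  apply not_preconn_of_sep huo hvo
  · intro q hq
    obtain ⟨a, rfl⟩ := Quot.exists_rep q
    have hne : JPt Z a ≠ JPt Z ⟨(p0, 1), Or.inr hp0B⟩ := hq
    have hlt : (a.val.2 : ℝ) < 1 := by
      rcases lt_or_eq_of_le a.val.2.2.2 with h | h
      · exact h
      · exfalso
        apply hne
        rw [jpt_eq_iff]
        exact Or.inr ⟨Subtype.ext h, rfl⟩
    by_cases hfst : a.val.1 = p0
    · exact Or.inl ⟨a, ⟨hfst, hlt⟩, rfl⟩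
    · exact Or.inr ⟨a, ⟨hfst, hlt⟩, rfl⟩
  · refine ⟨JPt Z ⟨(p0, 0), Or.inl rfl⟩, ?_, ⟨(p0,0), Or.inl rfl⟩, ⟨rfl, by norm_num⟩, rfl⟩
    apply jpt_ne
    · intro h
      have := fpt_height_coe h
      rw [ui_coe_zero, ui_coe_one] at this; norm_num at this
    · rintro ⟨h, -⟩
      have := ui_one_of_eq h
      rw [ui_coe_zero] at this; norm_num at this
  · refine ⟨JPt Z ⟨(z1, 0), Or.inl rfl⟩, ?_, ⟨(z1,0), Or.inl rfl⟩, ⟨hz1, by norm_num⟩, rfl⟩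
    apply jpt_ne
    · intro h
      exact hz1 (fpt_fst h)
    · rintro ⟨h, -⟩
      have := ui_one_of_eq h
      rw [ui_coe_zero] at this; norm_num at this
  · apply Set.eq_empty_iff_forall_notMem.mpr
    rintro x ⟨-, ⟨a, ha, rfl⟩, ⟨b, hb, hba⟩⟩
    have : b = a := by
      rw [jpt_eq_iff] at hba
      rcases hba with h | h
      · exact h
      · exfalso
        have h4 := ui_one_of_eq h.2
        have h3 : ((a.val.2 : ℝ)) < 1 := ha.2
        rw [h4] at h3
        exact absurd h3 (by norm_num)
    rw [this] at hb
    exact hb.1 ha.1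

theorem clopen_trick {V : Set (JSp Z)} (hV : IsPreconnected V)
    (hVapex : ∀ b : FPts (↥Z) (JB Z), b.val.2 = 1 → JPt Z b ∉ V)
    {p' r : ↥Z} {t s : unitInterval}
    (hp' : (p' : X × (ℕ → ℝ)) ∈ isoPts Z)
    (hrp : r ≠ p')
    {mc : (t = 0 ∨ p' ∈ JB Z)} {mq : (s = 0 ∨ r ∈ JB Z)}
    (hc : JPt Z ⟨(p', t), mc⟩ ∈ V) (hq : JPt Z ⟨(r, s), mq⟩ ∈ V) : False := by
  set Pu : Set (FPts (↥Z) (JB Z)) := {w | w.val.1 = p' ∧ (w.val.2 : ℝ) < 1} with hPu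
  set Pv : Set (FPts (↥Z) (JB Z)) := {w | w.val.1 ≠ p' ∧ (w.val.2 : ℝ) < 1} with hPv
  have hsatu : Saturated Pu := saturated_of_no_one (fun w hw => ht_ne_one hw.2)
  have hsatv : Saturated Pv := saturated_of_no_one (fun w hw => ht_ne_one hw.2)
  have huo : IsOpen (JPt Z '' Pu) :=
    isOpen_mk_image hsatu ((isOpen_fst_eq hp').inter (isOpen_ht_lt _))
  have hvo : IsOpen (JPt Z '' Pv) :=
    isOpen_mk_image hsatv (((isClosed_fst_eq p').isOpen_compl).inter (isOpen_ht_lt _))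
  have hlt : ∀ a : FPts (↥Z) (JB Z), JPt Z a ∈ V → (a.val.2 : ℝ) < 1 := by
    intro a ha
    rcases lt_or_eq_of_le a.val.2.2.2 with h | h
    · exact h
    · exact absurd ha (hVapex a (Subtype.ext h))
  have hcover : V ⊆ JPt Z '' Pu ∪ JPt Z '' Pv := by
    intro q hqV
    obtain ⟨a, rfl⟩ := Quot.exists_rep q
    by_cases hfst : a.val.1 = p'
    · exact Or.inl ⟨a, ⟨hfst, hlt a hqV⟩, rfl⟩
    · exact Or.inr ⟨a, ⟨hfst, hlt a hqV⟩, rfl⟩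
  have h1 : (V ∩ JPt Z '' Pu).Nonempty :=
    ⟨_, hc, ⟨(p', t), mc⟩, ⟨rfl, hlt _ hc⟩, rfl⟩
  have h2 : (V ∩ JPt Z '' Pv).Nonempty :=
    ⟨_, hq, ⟨(r, s), mq⟩, ⟨hrp, hlt _ hq⟩, rfl⟩
  obtain ⟨x, -, ⟨a, ha, rfl⟩, ⟨b, hb, hba⟩⟩ := hV _ _ huo hvo hcover h1 h2
  have : b = a := by
    rw [jpt_eq_iff] at hba
    rcases hba with h | h
    · exact h
    · exfalso
      have h4 := ui_one_of_eq h.2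
      have h3 : ((a.val.2 : ℝ)) < 1 := ha.2
      rw [h4] at h3
      exact absurd h3 (by norm_num)
  rw [this] at hb
  exact hb.1 ha.1
end Cut
theorem stmt16 {X : Type} [MetricSpace X] [CompactSpace X] [ConnectedSpace X]
    (hXnc : ∀ x : X, IsPreconnected ({x}ᶜ : Set X))
    {k : ℕ} (S : Fin (k + 1) → Set X)
    (hScl : ∀ i, IsClosed (S i)) (hSmono : Monotone S) (hSne : S (Fin.last k) ≠ ∅)
    (Z : Set (X × (ℕ → ℝ))) (hZ : IsIModel (List.ofFn S) Z) :
    ∀ q : JSp Z,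
      (∃ p : FPts (↥Z) (JB Z), JPt Z p = q ∧
          (p.val.1 : X × (ℕ → ℝ)) ∈ isoPts Z ∧ p.val.2 = 0) ↔
      ((∀ U : Set (JSp Z), IsOpen U → q ∈ U →
          ∃ V : Set (JSp Z), IsOpen V ∧ q ∈ V ∧ V ⊆ U ∧ IsConnected V ∧
            ∃ c ∈ V, ¬ IsPreconnected ({c}ᶜ : Set (JSp Z))) ∧
        IsPreconnected ({q}ᶜ : Set (JSp Z))) := by
  classical
  -- tower data
  have hlist : List.ofFn S = S 0 :: List.ofFn (fun i => S i.succ) := List.ofFn_succ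
  have hZ' : IsITowerFrom 0 (baseW X) (S 0 :: List.ofFn (fun i => S i.succ)) Z := by
    rw [IsIModel, hlist] at hZ; exact hZ
  have hbZ : baseW X ⊆ Z := tower_subset hZ'
  obtain ⟨D1, hD1Z, hD1nb, hD1cl⟩ := tower_first hZ'
  obtain ⟨Wm, Df, hZeq, hDfne, hDfnb, hDfiso, hDfcl, hWmW⟩ := tower_last hZ'
  have hgl : (S 0 :: List.ofFn (fun i => S i.succ)).getLast (by simp) = S (Fin.last k) := by
    have h1 : (List.ofFn S).getLast? = some (S (Fin.last k)) := by
      rw [List.getLast?_eq_getLast (l := List.ofFn S) (by simp), List.getLast_ofFn_succ]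
    rw [hlist, List.getLast?_eq_getLast
      (by simp : (S 0 :: List.ofFn fun i => S i.succ) ≠ [])] at h1
    exact Option.some_injective _ h1
  rw [hgl] at hDfcl
  set Q : Set X := S (Fin.last k) with hQdef
  have hQne : Q.Nonempty := Set.nonempty_iff_ne_empty.mpr hSne
  have hDfZ : Df ⊆ Z := fun p hp => hZeq ▸ Set.mem_union_right _ hp
  have hDfZb : Df ⊆ Z \ baseW X := fun p hp => ⟨hDfZ hp, hDfnb p hp⟩
  -- points of Q embed into cl(Z \ base)
  have hQZ : ∀ x ∈ Q, embW x ∈ closure (Z \ baseW X) := by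
    intro x hx
    have h1 : embW x ∈ closure Df \ Df := by
      rw [hDfcl]
      exact Or.inr ⟨x, hx, rfl⟩
    exact closure_mono hDfZb h1.1
  -- isolated points are off the base
  have hiso_nb : ∀ p ∈ isoPts Z, p ∉ baseW X := by
    intro p hp hpb
    have hpiso : p ∈ isoPts (baseW X) := by
      refine ⟨hpb, ?_⟩
      have hsub : baseW X \ {p} ⊆ Z \ {p} := fun z hz => ⟨hbZ hz.1, hz.2⟩
      exact le_bot_iff.mp ((nhdsWithin_mono p hsub).trans (le_of_eq hp.2))
    have hpcl : p ∈ closure D1 \ D1 := by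
      rw [hD1cl]; exact Or.inl hpiso
    have hD1sub : D1 ⊆ Z \ {p} := by
      intro z hz
      refine ⟨hD1Z hz, fun hc => ?_⟩
      rw [Set.mem_singleton_iff] at hc
      rw [hc] at hz
      exact hpcl.2 hz
    have hne : (𝓝[D1] p).NeBot := mem_closure_iff_nhdsWithin_neBot.mp hpcl.1
    have : (𝓝[Z \ {p}] p).NeBot := hne.mono (nhdsWithin_mono p hD1sub)
    rw [hp.2] at this
    exact this.ne rfl
  -- iso points are in JB
  have hisoB : ∀ p : ↥Z, (p : X × (ℕ → ℝ)) ∈ isoPts Z → p ∈ JB Z := by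
    intro p hp
    exact subset_closure ⟨p.2, hiso_nb _ hp⟩
  -- a fixed isolated point and a fixed base point
  obtain ⟨d, hd⟩ := hDfne
  have hdiso : d ∈ isoPts Z := ⟨hDfZ hd, by
    have := hDfiso d hd
    exact this⟩
  set p0 : ↥Z := ⟨d, hDfZ hd⟩ with hp0def
  have hp0iso : (p0 : X × (ℕ → ℝ)) ∈ isoPts Z := hdiso
  have hp0B : p0 ∈ JB Z := hisoB p0 hp0iso
  obtain ⟨xs, hxs⟩ := hQne
  set z1 : ↥Z := ⟨embW xs, hbZ rfl⟩ with hz1def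
  have hz1ne : z1 ≠ p0 := by
    intro h
    have hval : embW xs = d := congrArg Subtype.val h
    apply hDfnb d hd
    rw [← hval]
    exact rfl
  -- wrapper for the noncut lemma
  have noncut : ∀ (r : ↥Z) (s : unitInterval) (hs : (s:ℝ) < 1) (hw : s = 0 ∨ r ∈ JB Z),
      (s ≠ 0 → (r : X × (ℕ → ℝ)) ∉ isoPts Z) →
      ((r : X × (ℕ → ℝ)) ∈ baseW X → (∀ x ∈ Q, embW x = (r : X × (ℕ → ℝ))) →
        (s ≠ 0 ∨ baseW X ⊆ {(r : X × (ℕ → ℝ))})) →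
      IsPreconnected ({JPt Z ⟨(r, s), hw⟩}ᶜ : Set (JSp Z)) := by
    intro r s hs hw hni H2
    apply master_noncut hXnc hbZ ⟨xs, hxs⟩ hQZ r s hs hw
    · intro hs0 hrb
      have h1 : ¬ 𝓝[Z \ {(r : X × (ℕ → ℝ))}] (r : X × (ℕ → ℝ)) = ⊥ :=
        fun h => (hni hs0) ⟨r.2, h⟩
      exact mem_closure_iff_nhdsWithin_neBot.mpr (Filter.neBot_iff.mpr h1)
    · exact H2
  intro q
  constructor
  · -- (a) → (b)
    rintro ⟨p, rfl, hpiso, hp0ht⟩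
    have hrB : p.val.1 ∈ JB Z := hisoB _ hpiso
    constructor
    · -- (α)
      intro U hU hqU
      set r := p.val.1 with hrdef
      have hq0 : JPt Z p = arcMap Z r hrB 0 := by
        unfold arcMap
        apply congrArg
        exact Subtype.ext (Prod.ext_iff.mpr ⟨rfl, hp0ht⟩)
      have hUopen : IsOpen (arcMap Z r hrB ⁻¹' U) := hU.preimage (arcMap_continuous hrB)
      have h0mem : (0 : unitInterval) ∈ arcMap Z r hrB ⁻¹' U := by
        rw [Set.mem_preimage, ← hq0]; exact hqU
      obtain ⟨ε, hε, hball⟩ := Metric.isOpen_iff.mp hUopen 0 h0mem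
      set δ : ℝ := min (ε/2) (1/2) with hδdef
      have hδpos : 0 < δ := lt_min (by linarith) (by norm_num)
      have hδlt1 : δ < 1 := lt_of_le_of_lt (min_le_right _ _) (by norm_num)
      have hδltε : δ < ε := lt_of_le_of_lt (min_le_left _ _) (by linarith)
      have hδball : ∀ t : unitInterval, (t : ℝ) < δ → t ∈ Metric.ball (0 : unitInterval) ε := by
        intro t ht
        rw [Metric.mem_ball, Subtype.dist_eq, Real.dist_eq]
        rw [show ((0:unitInterval):ℝ) = 0 from rfl, sub_zero, abs_of_nonneg t.2.1]
        exact lt_trans ht hδltε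
      set PV : Set (FPts (↥Z) (JB Z)) := {w | w.val.1 = r ∧ (w.val.2 : ℝ) < δ} with hPVdef
      refine ⟨JPt Z '' PV, ?_, ?_, ?_, ?_, ?_⟩
      · apply isOpen_mk_image
        · exact saturated_of_no_one (fun w hw => ht_ne_one (lt_trans hw.2 hδlt1))
        · exact (isOpen_fst_eq hpiso).inter (isOpen_ht_lt _)
      · refine ⟨p, ⟨rfl, ?_⟩, rfl⟩
        rw [show ((p.val.2 : ℝ)) = 0 by rw [hp0ht]; rfl]
        exact hδpos
      · rintro x ⟨w', ⟨h1, h2⟩, rfl⟩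
        have : JPt Z w' = arcMap Z r hrB w'.val.2 := by
          unfold arcMap
          apply congrArg
          apply Subtype.ext
          show w'.val = (r, w'.val.2)
          rw [← h1]
        rw [this]
        exact hball (hδball _ h2)
      · constructor
        · exact ⟨JPt Z p, p, ⟨rfl, by rw [show ((p.val.2 : ℝ)) = 0 by rw [hp0ht]; rfl]; exact hδpos⟩, rfl⟩
        · rw [show PV = {w : FPts (↥Z) (JB Z) |
              w.val.1 = r ∧ w.val.2 ∈ {t : unitInterval | (t:ℝ) < δ}} from rfl]
          exact arc_piece_preconn r hrB (preconn_lt hδpos (le_of_lt hδlt1))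
      · refine ⟨JPt Z ⟨(r, ⟨δ/2, ⟨by linarith, by linarith⟩⟩), Or.inr hrB⟩, ?_, ?_⟩
        · exact ⟨⟨(r, ⟨δ/2, ⟨by linarith, by linarith⟩⟩), Or.inr hrB⟩,
            ⟨rfl, show δ/2 < δ by linarith⟩, rfl⟩
        · exact cut_iso_arc hpiso hrB (show (0:ℝ) < δ/2 by linarith)
            (show δ/2 < 1 by linarith)
    · -- (β)
      have h := noncut p.val.1 0 (by norm_num) (Or.inl rfl)
        (fun h => absurd rfl h) (fun hb _ => absurd hb (hiso_nb _ hpiso))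
      have heq : JPt Z ⟨(p.val.1, 0), Or.inl rfl⟩ = JPt Z p := by
        apply congrArg
        exact Subtype.ext (Prod.ext_iff.mpr ⟨rfl, hp0ht.symm⟩)
      rwa [heq] at h
  · -- (b) → (a)
    rintro ⟨hα, hβ⟩
    obtain ⟨a, rfl⟩ := Quot.exists_rep q
    have haq : (Quot.mk FRel a : JSp Z) = JPt Z a := rfl
    rw [haq] at hα hβ ⊢
    by_cases hs1 : a.val.2 = 1
    · exfalso
      have heq : JPt Z a = JPt Z ⟨(p0, 1), Or.inr hp0B⟩ := by
        rw [jpt_eq_iff]; exact Or.inr ⟨hs1, rfl⟩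
      rw [heq] at hβ
      exact cut_apex hp0iso hp0B hz1ne hβ
    · have hs1' : (a.val.2 : ℝ) < 1 :=
        lt_of_le_of_ne a.val.2.2.2 (fun h => hs1 (Subtype.ext h))
      have haeta : (⟨(a.val.1, a.val.2), a.2⟩ : FPts (↥Z) (JB Z)) = a := Subtype.ext rfl
      by_cases hiso : (a.val.1 : X × (ℕ → ℝ)) ∈ isoPts Z
      · by_cases hs0 : a.val.2 = 0
        · exact ⟨a, rfl, hiso, hs0⟩
        · exfalso
          have hrB2 : a.val.1 ∈ JB Z := a.2.resolve_left hs0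
          have h0 : (0:ℝ) < (a.val.2 : ℝ) := by
            rcases lt_or_eq_of_le a.val.2.2.1 with h | h
            · exact h
            · exact absurd (Subtype.ext h.symm) hs0
          have heq : JPt Z a = JPt Z ⟨(a.val.1, a.val.2), Or.inr hrB2⟩ := by
            apply congrArg; exact Subtype.ext rfl
          rw [heq] at hβ
          exact cut_iso_arc hiso hrB2 h0 hs1' hβ
      · -- a.val.1 is not isolated : refute (α)
        exfalso
        set c1 : ℝ := (1 + (a.val.2 : ℝ)) / 2 with hc1def
        have hc1a : (a.val.2 : ℝ) < c1 := by rw [hc1def]; linarith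
        have hc1b : c1 < 1 := by rw [hc1def]; linarith
        set erep : FPts (↥Z) (JB Z) := ⟨(z1, 0), Or.inl rfl⟩ with herepdef
        set e : JSp Z := JPt Z erep with hedef
        -- common part of the two cases
        by_cases hqe : e = JPt Z a
        · -- q is the potential exceptional point, but q is a noncut point by hβ
          set P : Set (FPts (↥Z) (JB Z)) := {w | (w.val.2 : ℝ) < c1} with hPdef
          have hPsat : Saturated P := saturated_of_no_one
            (fun w hw => ht_ne_one (lt_trans hw hc1b))
          have hPopen : IsOpen (JPt Z '' P) := isOpen_mk_image hPsat (isOpen_ht_lt _)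
          obtain ⟨V, hVo, hqV, hVU, hVconn, c, hcV, hccut⟩ :=
            hα (JPt Z '' P) hPopen ⟨a, hc1a, rfl⟩
          have hapexV : ∀ b : FPts (↥Z) (JB Z), b.val.2 = 1 → JPt Z b ∉ V := by
            intro b hb hbV
            obtain ⟨w', hw', hww⟩ := hVU hbV
            rw [jpt_eq_iff] at hww
            rcases hww with rfl | hww
            · exact absurd (ui_one_of_eq hb) (ne_of_lt (lt_trans hw' hc1b))
            · exact absurd (ui_one_of_eq hww.1) (ne_of_lt (lt_trans hw' hc1b))
          obtain ⟨wc, hwcP, hwceq⟩ := hVU hcV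
          by_cases hzi : (wc.val.1 : X × (ℕ → ℝ)) ∈ isoPts Z
          · -- c lies on the arc over an isolated point : clopen trick
            have hne2 : a.val.1 ≠ wc.val.1 := by
              intro h; rw [h] at hiso; exact hiso hzi
            apply clopen_trick hVconn.isPreconnected hapexV hzi hne2
              (mc := wc.2) (mq := a.2)
            · rw [show (⟨(wc.val.1, wc.val.2), wc.2⟩ : FPts (↥Z) (JB Z)) = wc from
                Subtype.ext rfl, hwceq]
              exact hcV
            · rw [show (⟨(a.val.1, a.val.2), a.2⟩ : FPts (↥Z) (JB Z)) = a from
                Subtype.ext rfl]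
              exact hqV
          · -- c is a noncut point unless it equals q
            by_cases hcq : c = JPt Z a
            · rw [hcq] at hccut; exact hccut hβ
            · apply hccut
              have hH2 : (wc.val.1 : X × (ℕ → ℝ)) ∈ baseW X →
                  (∀ x ∈ Q, embW x = (wc.val.1 : X × (ℕ → ℝ))) →
                  (wc.val.2 ≠ 0 ∨ baseW X ⊆ {(wc.val.1 : X × (ℕ → ℝ))}) := by
                intro hzb hall
                left
                intro hs'0
                apply hcq
                rw [← hwceq, ← hqe]
                show JPt Z wc = JPt Z erep
                apply congrArg
                apply Subtype.ext
                apply Prod.ext_iff.mpr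
                exact ⟨Subtype.ext (hall xs hxs).symm, hs'0⟩
              have h := noncut wc.val.1 wc.val.2 (lt_trans hwcP hc1b) wc.2
                (fun _ => hzi) hH2
              rw [show (⟨(wc.val.1, wc.val.2), wc.2⟩ : FPts (↥Z) (JB Z)) = wc from
                Subtype.ext rfl, hwceq] at h
              exact h
        · -- q is not the exceptional point; exclude it from U
          set P : Set (FPts (↥Z) (JB Z)) := {w | (w.val.2 : ℝ) < c1 ∧ w ≠ erep} with hPdef
          have hPsat : Saturated P := saturated_of_no_one
            (fun w hw => ht_ne_one (lt_trans hw.1 hc1b))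
          have hPopen : IsOpen (JPt Z '' P) := by
            apply isOpen_mk_image hPsat
            exact (isOpen_ht_lt _).inter (isClosed_singleton.isOpen_compl)
          have haP : a ∈ P := by
            refine ⟨hc1a, fun h => ?_⟩
            rw [h] at hqe
            exact hqe rfl
          obtain ⟨V, hVo, hqV, hVU, hVconn, c, hcV, hccut⟩ :=
            hα (JPt Z '' P) hPopen ⟨a, haP, rfl⟩
          have hapexV : ∀ b : FPts (↥Z) (JB Z), b.val.2 = 1 → JPt Z b ∉ V := by
            intro b hb hbV
            obtain ⟨w', hw', hww⟩ := hVU hbV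
            rw [jpt_eq_iff] at hww
            rcases hww with rfl | hww
            · exact absurd (ui_one_of_eq hb) (ne_of_lt (lt_trans hw'.1 hc1b))
            · exact absurd (ui_one_of_eq hww.1) (ne_of_lt (lt_trans hw'.1 hc1b))
          obtain ⟨wc, hwcP, hwceq⟩ := hVU hcV
          by_cases hzi : (wc.val.1 : X × (ℕ → ℝ)) ∈ isoPts Z
          · have hne3 : a.val.1 ≠ wc.val.1 := by
              intro h; rw [h] at hiso; exact hiso hzi
            apply clopen_trick hVconn.isPreconnected hapexV hzi hne3
              (mc := wc.2) (mq := a.2)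
            · rw [show (⟨(wc.val.1, wc.val.2), wc.2⟩ : FPts (↥Z) (JB Z)) = wc from
                Subtype.ext rfl, hwceq]
              exact hcV
            · rw [show (⟨(a.val.1, a.val.2), a.2⟩ : FPts (↥Z) (JB Z)) = a from
                Subtype.ext rfl]
              exact hqV
          · apply hccut
            have hH2 : (wc.val.1 : X × (ℕ → ℝ)) ∈ baseW X →
                (∀ x ∈ Q, embW x = (wc.val.1 : X × (ℕ → ℝ))) →
                (wc.val.2 ≠ 0 ∨ baseW X ⊆ {(wc.val.1 : X × (ℕ → ℝ))}) := by
              intro hzb hall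
              left
              intro hs'0
              apply hwcP.2
              apply Subtype.ext
              apply Prod.ext_iff.mpr
              exact ⟨Subtype.ext (hall xs hxs).symm, hs'0⟩
            have h := noncut wc.val.1 wc.val.2 (lt_trans hwcP.1 hc1b) wc.2
              (fun _ => hzi) hH2
            rw [show (⟨(wc.val.1, wc.val.2), wc.2⟩ : FPts (↥Z) (JB Z)) = wc from
              Subtype.ext rfl, hwceq] at h
            exact h
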